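/- Let l ≥ 2 be an integer and consider in ℚ² the four points u₁ = ((a−l)/(l+1), b/(l+1)), u₂ = u₁ + (l/(l+1), 0), u₄ = ((l² + a + l)/(2l+1), b/(2l+1)), and the origin, where a, b are integers with 0 ≤ a < b. The horizontal width of the quadrilateral conv(0, u₁, u₂, u₄) at height b/(2l+1) (the height of u₄) equals l(l+2)/(2l+1), which is strictly greater than 1. -/

import Mathlib

set_option maxHeartbeats 1000000

/-- The width computation in Situation 2B: the horizontal slice of
`conv(0, u₁, u₂, u₄)` at the height of `u₄` is an interval of length
`l(l+2)/(2l+1) > 1`. -/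
theorem situation2B_width (l a b : ℤ) (hl : 2 ≤ l) (ha : 0 ≤ a) (hab : a < b) :
    {x : ℚ | (![x, (b : ℚ) / (2 * l + 1)]) ∈ convexHull ℚ
        ({0,
          ![((a : ℚ) - l) / (l + 1), (b : ℚ) / (l + 1)],
          ![((a : ℚ) - l) / (l + 1) + (l : ℚ) / (l + 1), (b : ℚ) / (l + 1)],
          ![((l : ℚ) ^ 2 + a + l) / (2 * l + 1), (b : ℚ) / (2 * l + 1)]} :
          Set (Fin 2 → ℚ))} =
      Set.Icc (((a : ℚ) - l) / (2 * l + 1))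
        (((a : ℚ) - l) / (2 * l + 1) + (l : ℚ) * (l + 2) / (2 * l + 1)) ∧
    1 < (l : ℚ) * (l + 2) / (2 * l + 1) := by
  have hl2 : (2:ℚ) ≤ (l:ℚ) := by exact_mod_cast hl
  have haq : (0:ℚ) ≤ (a:ℚ) := by exact_mod_cast ha
  have hb : (0:ℚ) < (b:ℚ) := by exact_mod_cast lt_of_le_of_lt ha hab
  have h2l : (0:ℚ) < 2*(l:ℚ)+1 := by linarith
  have hl1 : (0:ℚ) < (l:ℚ)+1 := by linarith
  have h2l' : (2*(l:ℚ)+1) ≠ 0 := ne_of_gt h2l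
  have hl1' : ((l:ℚ)+1) ≠ 0 := ne_of_gt hl1
  have hc0 : (0:ℚ) < (l:ℚ)*((l:ℚ)+2) := by nlinarith
  constructor
  · ext x
    simp only [Set.mem_setOf_eq, Set.mem_Icc]
    constructor
    · intro hx
      have hD : ![x, (b:ℚ)/(2*l+1)] ∈ {p : Fin 2 → ℚ |
          0 ≤ (b:ℚ) * p 0 - ((a:ℚ) - l) * p 1 ∧
          (b:ℚ) * p 0 + (((l:ℚ)+1)^2 - a) * p 1 ≤ (b:ℚ)*((l:ℚ)+1)} := by
        refine convexHull_min ?_ ?_ hx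
        · simp only [Set.insert_subset_iff, Set.singleton_subset_iff, Set.mem_setOf_eq,
            Pi.zero_apply, Matrix.cons_val_zero, Matrix.cons_val_one, Matrix.head_cons]
          have hbl : (0:ℚ) ≤ (b:ℚ)*l := by nlinarith
          have hbl2 : (0:ℚ) ≤ (b:ℚ)*((l:ℚ)^2+2*l) := by nlinarith
          refine ⟨⟨by norm_num, by nlinarith [mul_pos hb hl1]⟩, ⟨?_, ?_⟩, ⟨?_, ?_⟩, ⟨?_, ?_⟩⟩
          · have e : (b:ℚ)*(((a:ℚ)-l)/(l+1)) - ((a:ℚ)-l)*((b:ℚ)/(l+1)) = 0 := by ring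
            linarith
          · have e : (b:ℚ)*(((a:ℚ)-l)/(l+1)) + (((l:ℚ)+1)^2-a)*((b:ℚ)/(l+1))
                = (b:ℚ)*(l+1) - (b:ℚ)*l/(l+1) := by field_simp; ring
            have := div_nonneg hbl hl1.le
            linarith
          · have e : (b:ℚ)*(((a:ℚ)-l)/(l+1) + (l:ℚ)/(l+1)) - ((a:ℚ)-l)*((b:ℚ)/(l+1))
                = (b:ℚ)*l/(l+1) := by field_simp; ring
            have := div_nonneg hbl hl1.le
            linarith
          · have e : (b:ℚ)*(((a:ℚ)-l)/(l+1) + (l:ℚ)/(l+1)) + (((l:ℚ)+1)^2-a)*((b:ℚ)/(l+1))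
                = (b:ℚ)*(l+1) := by field_simp; ring
            linarith
          · have e : (b:ℚ)*(((l:ℚ)^2+a+l)/(2*l+1)) - ((a:ℚ)-l)*((b:ℚ)/(2*l+1))
                = (b:ℚ)*((l:ℚ)^2+2*l)/(2*l+1) := by field_simp; ring
            have := div_nonneg hbl2 h2l.le
            linarith
          · have e : (b:ℚ)*(((l:ℚ)^2+a+l)/(2*l+1)) + (((l:ℚ)+1)^2-a)*((b:ℚ)/(2*l+1))
                = (b:ℚ)*(l+1) := by field_simp; ring
            linarith
        · intro p hp q hq α β hα hβ hαβ
          simp only [Set.mem_setOf_eq, Pi.add_apply, Pi.smul_apply, smul_eq_mul] at *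
          constructor
          · nlinarith [add_nonneg (mul_nonneg hα hp.1) (mul_nonneg hβ hq.1)]
          · nlinarith [add_le_add (mul_le_mul_of_nonneg_left hp.2 hα)
              (mul_le_mul_of_nonneg_left hq.2 hβ), mul_pos hb hl1]
      simp only [Set.mem_setOf_eq, Matrix.cons_val_zero, Matrix.cons_val_one,
        Matrix.head_cons] at hD
      obtain ⟨h1, h2⟩ := hD
      have e1 : ((a:ℚ) - l) * ((b:ℚ)/(2*l+1)) * (2*l+1) = ((a:ℚ)-l)*b := by
        field_simp
      constructor
      · rw [div_le_iff₀ h2l]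
        nlinarith [h1, hb, e1, mul_nonneg h1 (le_of_lt h2l)]
      · have e2 : (((l:ℚ)+1)^2 - a) * ((b:ℚ)/(2*l+1)) * (2*l+1) = (((l:ℚ)+1)^2 - a)*b := by
          field_simp
        rw [← add_div, le_div_iff₀ h2l]
        nlinarith [h2, hb, e2, mul_le_mul_of_nonneg_right h2 (le_of_lt h2l)]
    · rintro ⟨hx1, hx2⟩
      have hb1 : (a:ℚ) - l ≤ x*(2*l+1) := by
        rw [div_le_iff₀ h2l] at hx1; linarith
      have hb2 : x*(2*l+1) ≤ (a:ℚ) - l + l*(l+2) := by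
        rw [← add_div, le_div_iff₀ h2l] at hx2; linarith
      set w4 : ℚ := (x*(2*l+1) - ((a:ℚ)-l))/((l:ℚ)*((l:ℚ)+2)) with hw4
      set w1 : ℚ := (1 - w4)*((l:ℚ)+1)/(2*(l:ℚ)+1) with hw1
      have hw40 : 0 ≤ w4 := div_nonneg (by linarith) (le_of_lt hc0)
      have hw41 : w4 ≤ 1 := by
        rw [hw4, div_le_one hc0]; linarith
      have hw10 : 0 ≤ w1 := div_nonneg (mul_nonneg (by linarith) (le_of_lt hl1)) (le_of_lt h2l)
      have hw00 : 0 ≤ 1 - w1 - w4 := by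
        have key : (2*(l:ℚ)+1)*(1 - w1 - w4) = (1-w4)*(l:ℚ) := by
          rw [hw1]; field_simp; ring
        nlinarith [mul_nonneg (by linarith : (0:ℚ) ≤ 1 - w4) (by linarith : (0:ℚ) ≤ (l:ℚ))]
      have hsum : ∑ i : Fin 3, (![1 - w1 - w4, w1, w4] : Fin 3 → ℚ) i = 1 := by
        simp [Fin.sum_univ_three]; ring
      have hmem := Finset.centerMass_mem_convexHull
        (s := ({0,
          ![((a : ℚ) - l) / (l + 1), (b : ℚ) / (l + 1)],
          ![((a : ℚ) - l) / (l + 1) + (l : ℚ) / (l + 1), (b : ℚ) / (l + 1)],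
          ![((l : ℚ) ^ 2 + a + l) / (2 * l + 1), (b : ℚ) / (2 * l + 1)]} :
          Set (Fin 2 → ℚ)))
        (t := (Finset.univ : Finset (Fin 3)))
        (w := ![1 - w1 - w4, w1, w4])
        (z := ![(0 : Fin 2 → ℚ),
          ![((a : ℚ) - l) / (l + 1), (b : ℚ) / (l + 1)],
          ![((l : ℚ) ^ 2 + a + l) / (2 * l + 1), (b : ℚ) / (2 * l + 1)]])
        (fun i _ => by
          fin_cases i <;> simp [Matrix.cons_val_zero, Matrix.cons_val_one,
            Matrix.head_cons] <;> linarith)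
        (by rw [hsum]; norm_num)
        (fun i _ => by
          fin_cases i <;> simp [Set.mem_insert_iff])
      rw [Finset.centerMass_eq_of_sum_1 _ _ hsum] at hmem
      simp only [Fin.sum_univ_three, Matrix.cons_val_zero, Matrix.cons_val_one,
        Matrix.head_cons, Matrix.cons_val_two, Matrix.tail_cons, smul_zero, zero_add] at hmem
      have heq : (![x, (b:ℚ)/(2*l+1)] : Fin 2 → ℚ) =
          w1 • (![((a : ℚ) - l) / (l + 1), (b : ℚ) / (l + 1)] : Fin 2 → ℚ) +
          w4 • (![((l : ℚ) ^ 2 + a + l) / (2 * l + 1), (b : ℚ) / (2 * l + 1)] : Fin 2 → ℚ) := by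
        funext i
        fin_cases i <;>
          simp only [Fin.zero_eta, Fin.mk_one, Pi.add_apply, Pi.smul_apply, smul_eq_mul, Matrix.cons_val_zero,
            Matrix.cons_val_one, Matrix.head_cons] <;>
          rw [hw1, hw4] <;> field_simp <;> ring
      rw [heq]
      exact hmem
  · rw [lt_div_iff₀ h2l]
    nlinarith
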